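/- Suppose R_M ⫫ M | (X, A, Y) and R_Y ⫫ (M, Y) | (X, A, R_M) (Model S5). Then [P(R_M = 1 | X, A) · P(R_Y = 1 | X, A, M, R_M = 1)] / P(R_M = 1, R_Y = 1 | X, A, M, Y) = P(R_M = 1 | X, A) / P(R_M = 1 | X, A, Y), for all values with positive conditioning probabilities and positive denominators. -/

import Mathlib

open scoped Classical

noncomputable def Pr {Ω : Type*} [Fintype Ω] (p : Ω → ℝ) (E : Ω → Prop) : ℝ :=
  ∑ ω, if E ω then p ω else 0

noncomputable def cPr {Ω : Type*} [Fintype Ω] (p : Ω → ℝ) (E F : Ω → Prop) : ℝ :=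
  Pr p (fun ω => E ω ∧ F ω) / Pr p F

noncomputable def odds {Ω : Type*} [Fintype Ω] (p : Ω → ℝ) (E F : Ω → Prop) : ℝ :=
  cPr p E F / cPr p (fun ω => ¬ E ω) F

lemma Pr_congr {Ω : Type*} [Fintype Ω] (p : Ω → ℝ) {E F : Ω → Prop}
    (h : ∀ ω, E ω ↔ F ω) : Pr p E = Pr p F := by
  unfold Pr; apply Finset.sum_congr rfl; intro ω _; simp [h ω]

lemma cPr_congr {Ω : Type*} [Fintype Ω] (p : Ω → ℝ) {E F F' : Ω → Prop}
    (h : ∀ ω, F ω ↔ F' ω) : cPr p E F = cPr p E F' := by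
  unfold cPr
  rw [Pr_congr p h, Pr_congr p (fun ω => and_congr_right fun _ => h ω)]

lemma Pr_nonneg {Ω : Type*} [Fintype Ω] (p : Ω → ℝ) (hp : ∀ ω, 0 ≤ p ω) (E : Ω → Prop) :
    0 ≤ Pr p E := Finset.sum_nonneg fun ω _ => by by_cases h : E ω <;> simp [h, hp ω]

lemma Pr_mono {Ω : Type*} [Fintype Ω] (p : Ω → ℝ) (hp : ∀ ω, 0 ≤ p ω) {E F : Ω → Prop}
    (h : ∀ ω, E ω → F ω) : Pr p E ≤ Pr p F := by
  apply Finset.sum_le_sum; intro ω _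
  by_cases hE : E ω
  · simp [hE, h ω hE]
  · by_cases hF : F ω <;> simp [hE, hF, hp ω]

lemma Pr_fiber {Ω 𝒴 : Type*} [Fintype Ω] (p : Ω → ℝ) (Y : Ω → 𝒴) (E : Ω → Prop) :
    Pr p E = ∑ y ∈ Finset.univ.image Y, Pr p (fun ω => E ω ∧ Y ω = y) := by
  unfold Pr
  rw [Finset.sum_comm]
  apply Finset.sum_congr rfl
  intro ω _
  by_cases hE : E ω
  · simp only [hE, true_and]
    rw [Finset.sum_ite_eq (Finset.univ.image Y) (Y ω) (fun _ => p ω)]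
    simp
  · simp [hE]

lemma cPr_mul {Ω : Type*} [Fintype Ω] (p : Ω → ℝ) {E F : Ω → Prop}
    (hF : Pr p F ≠ 0) : Pr p (fun ω => E ω ∧ F ω) = cPr p E F * Pr p F := by
  unfold cPr; field_simp

/-- Identification of `g = hk` in Model S5. -/
theorem S5_tilting_identification
    {Ω 𝒳 𝒜 ℳ 𝒴 : Type*} [Fintype Ω]
    (p : Ω → ℝ) (hp : ∀ ω, 0 ≤ p ω) (hsum : ∑ ω, p ω = 1)
    (X : Ω → 𝒳) (A : Ω → 𝒜) (M : Ω → ℳ) (Y : Ω → 𝒴) (RM RY : Ω → ℕ)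
    (hRM : ∀ ω, RM ω = 0 ∨ RM ω = 1) (hRY : ∀ ω, RY ω = 0 ∨ RY ω = 1)
    -- R_M ⫫ M ∣ (X, A, Y)
    (h1 : ∀ (rm : ℕ) (m : ℳ) (x : 𝒳) (a : 𝒜) (y : 𝒴),
      0 < Pr p (fun ω => M ω = m ∧ X ω = x ∧ A ω = a ∧ Y ω = y) →
      cPr p (fun ω => RM ω = rm) (fun ω => M ω = m ∧ X ω = x ∧ A ω = a ∧ Y ω = y)
        = cPr p (fun ω => RM ω = rm) (fun ω => X ω = x ∧ A ω = a ∧ Y ω = y))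
    -- R_Y ⫫ (M, Y) ∣ (X, A, R_M)
    (h2 : ∀ (ry : ℕ) (m : ℳ) (y : 𝒴) (x : 𝒳) (a : 𝒜) (rm : ℕ),
      0 < Pr p (fun ω => M ω = m ∧ Y ω = y ∧ X ω = x ∧ A ω = a ∧ RM ω = rm) →
      cPr p (fun ω => RY ω = ry)
          (fun ω => M ω = m ∧ Y ω = y ∧ X ω = x ∧ A ω = a ∧ RM ω = rm)
        = cPr p (fun ω => RY ω = ry) (fun ω => X ω = x ∧ A ω = a ∧ RM ω = rm)) :
    ∀ (x : 𝒳) (a : 𝒜) (m : ℳ) (y : 𝒴),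
      0 < Pr p (fun ω => X ω = x ∧ A ω = a ∧ M ω = m ∧ Y ω = y) →
      0 < Pr p (fun ω => X ω = x ∧ A ω = a ∧ M ω = m ∧ RM ω = 1) →
      0 < Pr p (fun ω => X ω = x ∧ A ω = a ∧ M ω = m ∧ Y ω = y ∧ RM ω = 1) →
      0 < cPr p (fun ω => RM ω = 1 ∧ RY ω = 1)
            (fun ω => X ω = x ∧ A ω = a ∧ M ω = m ∧ Y ω = y) →
      0 < cPr p (fun ω => RM ω = 1) (fun ω => X ω = x ∧ A ω = a ∧ Y ω = y) →
      (cPr p (fun ω => RM ω = 1) (fun ω => X ω = x ∧ A ω = a)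
          * cPr p (fun ω => RY ω = 1) (fun ω => X ω = x ∧ A ω = a ∧ M ω = m ∧ RM ω = 1))
        / cPr p (fun ω => RM ω = 1 ∧ RY ω = 1)
            (fun ω => X ω = x ∧ A ω = a ∧ M ω = m ∧ Y ω = y)
        = cPr p (fun ω => RM ω = 1) (fun ω => X ω = x ∧ A ω = a)
          / cPr p (fun ω => RM ω = 1) (fun ω => X ω = x ∧ A ω = a ∧ Y ω = y) := by
  intro x a m y hP1 hP2 hP3 hD hH
  -- abbreviations
  set g := cPr p (fun ω => RM ω = 1) (fun ω => X ω = x ∧ A ω = a) with hg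
  set h' := cPr p (fun ω => RM ω = 1) (fun ω => X ω = x ∧ A ω = a ∧ Y ω = y) with hh'
  set k := cPr p (fun ω => RY ω = 1) (fun ω => X ω = x ∧ A ω = a ∧ RM ω = 1) with hk
  -- Step A : cPr(RY=1 | X,A,M,RM=1) = k  (via fiberwise decomposition over Y)
  have hA : cPr p (fun ω => RY ω = 1)
      (fun ω => X ω = x ∧ A ω = a ∧ M ω = m ∧ RM ω = 1) = k := by
    have hnum : Pr p (fun ω => RY ω = 1 ∧ (X ω = x ∧ A ω = a ∧ M ω = m ∧ RM ω = 1))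
        = k * Pr p (fun ω => X ω = x ∧ A ω = a ∧ M ω = m ∧ RM ω = 1) := by
      rw [Pr_fiber p Y (fun ω => RY ω = 1 ∧ (X ω = x ∧ A ω = a ∧ M ω = m ∧ RM ω = 1)),
        Pr_fiber p Y (fun ω => X ω = x ∧ A ω = a ∧ M ω = m ∧ RM ω = 1), Finset.mul_sum]
      apply Finset.sum_congr rfl
      intro y' _
      by_cases hpos : 0 < Pr p (fun ω =>
          M ω = m ∧ Y ω = y' ∧ X ω = x ∧ A ω = a ∧ RM ω = 1)
      · have h2y := h2 1 m y' x a 1 hpos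
        have e1 : Pr p (fun ω => (RY ω = 1 ∧ (X ω = x ∧ A ω = a ∧ M ω = m ∧ RM ω = 1))
              ∧ Y ω = y')
            = Pr p (fun ω => RY ω = 1 ∧
              (M ω = m ∧ Y ω = y' ∧ X ω = x ∧ A ω = a ∧ RM ω = 1)) :=
          Pr_congr p (fun ω => by tauto)
        have e2 : Pr p (fun ω => (X ω = x ∧ A ω = a ∧ M ω = m ∧ RM ω = 1) ∧ Y ω = y')
            = Pr p (fun ω => M ω = m ∧ Y ω = y' ∧ X ω = x ∧ A ω = a ∧ RM ω = 1) :=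
          Pr_congr p (fun ω => by tauto)
        rw [e1, e2, cPr_mul p hpos.ne', h2y, ← hk]
      · have h0 : Pr p (fun ω => (X ω = x ∧ A ω = a ∧ M ω = m ∧ RM ω = 1) ∧ Y ω = y')
            = 0 := by
          have := Pr_nonneg p hp (fun ω =>
            (X ω = x ∧ A ω = a ∧ M ω = m ∧ RM ω = 1) ∧ Y ω = y')
          have hle : Pr p (fun ω => (X ω = x ∧ A ω = a ∧ M ω = m ∧ RM ω = 1) ∧ Y ω = y')
              ≤ 0 := by
            have e2 : Pr p (fun ω => (X ω = x ∧ A ω = a ∧ M ω = m ∧ RM ω = 1) ∧ Y ω = y')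
                = Pr p (fun ω => M ω = m ∧ Y ω = y' ∧ X ω = x ∧ A ω = a ∧ RM ω = 1) :=
              Pr_congr p (fun ω => by tauto)
            rw [e2]; exact le_of_not_gt hpos
          linarith
        have h0' : Pr p (fun ω =>
            (RY ω = 1 ∧ (X ω = x ∧ A ω = a ∧ M ω = m ∧ RM ω = 1)) ∧ Y ω = y') = 0 := by
          have hle := Pr_mono p hp (E := fun ω =>
              (RY ω = 1 ∧ (X ω = x ∧ A ω = a ∧ M ω = m ∧ RM ω = 1)) ∧ Y ω = y')
            (F := fun ω => (X ω = x ∧ A ω = a ∧ M ω = m ∧ RM ω = 1) ∧ Y ω = y')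
            (fun ω hω => ⟨hω.1.2, hω.2⟩)
          have hge := Pr_nonneg p hp (fun ω =>
            (RY ω = 1 ∧ (X ω = x ∧ A ω = a ∧ M ω = m ∧ RM ω = 1)) ∧ Y ω = y')
          rw [h0] at hle; linarith
        rw [h0, h0', mul_zero]
    unfold cPr
    rw [hnum, mul_div_assoc, div_self hP2.ne', mul_one]
  -- Step C : cPr(RM=1 | X,A,M,Y) = h'
  have hC : cPr p (fun ω => RM ω = 1)
      (fun ω => X ω = x ∧ A ω = a ∧ M ω = m ∧ Y ω = y) = h' := by
    have hpos : 0 < Pr p (fun ω => M ω = m ∧ X ω = x ∧ A ω = a ∧ Y ω = y) := by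
      rwa [Pr_congr p (F := fun ω => X ω = x ∧ A ω = a ∧ M ω = m ∧ Y ω = y)
        (fun ω => by tauto)]
    rw [cPr_congr p (F' := fun ω => M ω = m ∧ X ω = x ∧ A ω = a ∧ Y ω = y)
      (fun ω => by tauto), h1 1 m x a y hpos]
  -- Step B : cPr(RY=1 | RM=1, X,A,M,Y) = k
  have hB : cPr p (fun ω => RY ω = 1)
      (fun ω => RM ω = 1 ∧ (X ω = x ∧ A ω = a ∧ M ω = m ∧ Y ω = y)) = k := by
    have hpos : 0 < Pr p (fun ω =>
        M ω = m ∧ Y ω = y ∧ X ω = x ∧ A ω = a ∧ RM ω = 1) := by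
      rwa [Pr_congr p
        (F := fun ω => X ω = x ∧ A ω = a ∧ M ω = m ∧ Y ω = y ∧ RM ω = 1)
        (fun ω => by tauto)]
    rw [cPr_congr p
      (F' := fun ω => M ω = m ∧ Y ω = y ∧ X ω = x ∧ A ω = a ∧ RM ω = 1)
      (fun ω => by tauto), h2 1 m y x a 1 hpos]
  -- chain rule for the denominator
  have hRMC : Pr p (fun ω => RM ω = 1 ∧ (X ω = x ∧ A ω = a ∧ M ω = m ∧ Y ω = y)) ≠ 0 := by
    have : Pr p (fun ω => RM ω = 1 ∧ (X ω = x ∧ A ω = a ∧ M ω = m ∧ Y ω = y))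
        = Pr p (fun ω => X ω = x ∧ A ω = a ∧ M ω = m ∧ Y ω = y ∧ RM ω = 1) :=
      Pr_congr p (fun ω => by tauto)
    rw [this]; exact hP3.ne'
  have hchain : cPr p (fun ω => RM ω = 1 ∧ RY ω = 1)
      (fun ω => X ω = x ∧ A ω = a ∧ M ω = m ∧ Y ω = y) = k * h' := by
    have e1 : Pr p (fun ω => (RM ω = 1 ∧ RY ω = 1)
          ∧ (X ω = x ∧ A ω = a ∧ M ω = m ∧ Y ω = y))
        = Pr p (fun ω => RY ω = 1
          ∧ (RM ω = 1 ∧ (X ω = x ∧ A ω = a ∧ M ω = m ∧ Y ω = y))) :=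
      Pr_congr p (fun ω => by tauto)
    unfold cPr
    rw [e1, cPr_mul p hRMC, hB, mul_div_assoc]
    show k * cPr p (fun ω => RM ω = 1)
      (fun ω => X ω = x ∧ A ω = a ∧ M ω = m ∧ Y ω = y) = k * h'
    rw [hC]
  -- finish
  rw [hA, hchain]
  have hk0 : k ≠ 0 := by
    intro h0
    rw [hchain, h0, zero_mul] at hD
    exact lt_irrefl 0 hD
  have hh0 : h' ≠ 0 := hH.ne'
  field_simp
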